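/- Let S be a string, let τ ≥ 1, and let i, j, m be positive integers with m ≥ τ, i + m − 1 ≤ |S| and j + m − 1 ≤ |S|. Suppose A ⊆ [i, i + m − τ] is a set of positions such that: (covering) for every position p ∈ [i, i + m − 1] there exists a ∈ A with a ≤ p ≤ a + τ − 1; and (matching occurrences) for every a ∈ A, S[a, a + τ − 1] = S[a + (j − i), a + (j − i) + τ − 1]. Then S[i, i + m − 1] = S[j, j + m − 1]. -/
import Mathlib


/-- **Substring equality from a covering by matching occurrences.**
The string is modeled as `S : ℕ → Alph` on 1-indexed positions with length `n`.
`A ⊆ [i, i+m−τ]` is a set of positions such that every position of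
`S[i, i+m−1]` is covered by some length-`τ` occurrence starting in `A`, and
each such occurrence matches the corresponding occurrence shifted to the
`j`-side (the occurrence starting at position `j + (a − i)`).
Then `S[i, i+m−1] = S[j, j+m−1]`. -/
theorem substring_eq_of_covering {Alph : Type*} (S : ℕ → Alph) (n τ i j m : ℕ)
    (hτ : 1 ≤ τ) (hi : 1 ≤ i) (hj : 1 ≤ j) (hm : τ ≤ m)
    (hin : i + m - 1 ≤ n) (hjn : j + m - 1 ≤ n)
    (A : Set ℕ) (hA : A ⊆ Set.Icc i (i + m - τ))
    (hcover : ∀ p, i ≤ p → p ≤ i + m - 1 → ∃ a ∈ A, a ≤ p ∧ p ≤ a + τ - 1)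
    (hmatch : ∀ a ∈ A, ∀ t < τ, S (a + t) = S (j + (a - i) + t)) :
    ∀ t < m, S (i + t) = S (j + t) := by
  intro t ht
  obtain ⟨a, haA, h1, h2⟩ := hcover (i + t) (by omega) (by omega)
  have hai := hA haA
  simp only [Set.mem_Icc] at hai
  have := hmatch a haA (i + t - a) (by omega)
  have e1 : a + (i + t - a) = i + t := by omega
  have e2 : j + (a - i) + (i + t - a) = j + t := by omega
  rw [e1, e2] at this
  exact this
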